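/- (Complex arcsine law.) Let G1, G2, G3, G4 be i.i.d. real standard normal random variables, let r, s ∈ ℝ with r² + s² ≤ 1, and set U1 = G1, U2 = G2, V1 = r G1 + s G2 + √(1 − r² − s²) G3, V2 = −s G1 + r G2 + √(1 − r² − s²) G4. Then E[ (sgn(U1) + j·sgn(U2)) · (sgn(V1) − j·sgn(V2)) ] = (4/π) ( arcsin(r) + j·arcsin(s) ). (Equivalently: for the unit-variance circularly symmetric complex Gaussian pair X = (U1 + j U2)/√2, Y = (V1 + j V2)/√2, which satisfies E[X conj(Y)] = r + js, the 1-bit quantized correlation E[(sgn(Re X)+j sgn(Im X))(sgn(Re Y) − j sgn(Im Y))] equals (4/π)(arcsin(r) + j arcsin(s)).) -/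

import Mathlib

section AuxArcsineLaw
open MeasureTheory ProbabilityTheory Real Set

noncomputable abbrev gR : MeasureTheory.Measure ℝ := ProbabilityTheory.gaussianReal 0 1

lemma gR_eq : gR = volume.withDensity (gaussianPDF 0 1) :=
  gaussianReal_of_var_ne_zero 0 one_ne_zero

lemma pdf_eq (x : ℝ) : gaussianPDFReal 0 1 x = (Real.sqrt (2 * π))⁻¹ * rexp (-x^2/2) := by
  simp [gaussianPDFReal]

lemma gauss2_eq : gR.prod gR
    = (volume : Measure (ℝ × ℝ)).withDensity (fun p => gaussianPDF 0 1 p.1 * gaussianPDF 0 1 p.2) := by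
  refine (Measure.prod_eq fun u t hu ht => ?_)
  rw [withDensity_apply _ (hu.prod ht), Measure.volume_eq_prod, ← Measure.prod_restrict,
    lintegral_prod_mul (measurable_gaussianPDF 0 1).aemeasurable (measurable_gaussianPDF 0 1).aemeasurable,
    gR_eq, withDensity_apply _ hu, withDensity_apply _ ht]

lemma gaussianPDF_rot (c s : ℝ) (h : c^2 + s^2 = 1) (p : ℝ × ℝ) :
    gaussianPDF 0 1 (c * p.1 + s * p.2) * gaussianPDF 0 1 (-s * p.1 + c * p.2)
      = gaussianPDF 0 1 p.1 * gaussianPDF 0 1 p.2 := by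
  have key : ∀ x y : ℝ, gaussianPDF 0 1 x * gaussianPDF 0 1 y
      = ENNReal.ofReal ((Real.sqrt (2 * π))⁻¹ * rexp (-x^2/2) * ((Real.sqrt (2 * π))⁻¹ * rexp (-y^2/2))) := by
    intro x y
    rw [gaussianPDF, gaussianPDF, pdf_eq, pdf_eq, ← ENNReal.ofReal_mul (by positivity)]
  rw [key, key]
  congr 1
  have hexp : rexp (-(c * p.1 + s * p.2)^2/2) * rexp (-(-s * p.1 + c * p.2)^2/2)
      = rexp (-p.1^2/2) * rexp (-p.2^2/2) := by
    rw [← Real.exp_add, ← Real.exp_add]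
    congr 1
    nlinarith
  linear_combination (Real.sqrt (2 * π))⁻¹ * (Real.sqrt (2 * π))⁻¹ * hexp

lemma measurable_realSign : Measurable Real.sign := by
  unfold Real.sign
  exact Measurable.ite (measurableSet_lt measurable_id measurable_const) measurable_const (Measurable.ite (measurableSet_lt measurable_const measurable_id) measurable_const measurable_const)

lemma abs_realSign (x : ℝ) : |Real.sign x| ≤ 1 := by
  rcases Real.sign_apply_eq x with h | h | h <;> rw [h] <;> norm_num

lemma realSign_pos_mul {r : ℝ} (hr : 0 < r) (x : ℝ) : Real.sign (r * x) = Real.sign x := by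
  rcases lt_trichotomy x 0 with h | h | h
  · rw [Real.sign_of_neg h, Real.sign_of_neg (by nlinarith)]
  · simp [h]
  · rw [Real.sign_of_pos h, Real.sign_of_pos (by nlinarith)]

noncomputable def rotL (c s : ℝ) : (ℝ × ℝ) →ₗ[ℝ] (ℝ × ℝ) :=
  Matrix.toLin (Module.Basis.finTwoProd ℝ) (Module.Basis.finTwoProd ℝ) !![c, s; -s, c]

lemma rotL_apply (c s : ℝ) (p : ℝ × ℝ) : rotL c s p = (c * p.1 + s * p.2, -s * p.1 + c * p.2) := by
  simp [rotL, Matrix.toLin_finTwoProd_apply]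

lemma rotL_det (c s : ℝ) (h : c^2 + s^2 = 1) : LinearMap.det (rotL c s) = 1 := by
  rw [rotL, LinearMap.det_toLin, Matrix.det_fin_two_of]
  nlinarith

lemma map_rot_volume (c s : ℝ) (h : c^2 + s^2 = 1) :
    Measure.map (fun p : ℝ × ℝ => (c * p.1 + s * p.2, -s * p.1 + c * p.2)) volume = volume := by
  have : (fun p : ℝ × ℝ => (c * p.1 + s * p.2, -s * p.1 + c * p.2)) = ⇑(rotL c s) := by
    funext p; rw [rotL_apply]
  rw [this, Measure.map_linearMap_addHaar_eq_smul_addHaar _ (by rw [rotL_det c s h]; norm_num),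
    rotL_det c s h]
  simp

-- deps (will inline): gR gauss2_eq gaussianPDF_rot map_rot_volume
lemma rot_measurable (c s : ℝ) :
    Measurable (fun p : ℝ × ℝ => (c * p.1 + s * p.2, -s * p.1 + c * p.2)) := by
  fun_prop

lemma map_rot_gauss2 (c s : ℝ) (h : c^2 + s^2 = 1) :
    Measure.map (fun p : ℝ × ℝ => (c * p.1 + s * p.2, -s * p.1 + c * p.2)) (gR.prod gR)
      = gR.prod gR := by
  set R := fun p : ℝ × ℝ => (c * p.1 + s * p.2, -s * p.1 + c * p.2) with hR
  set f := fun p : ℝ × ℝ => gaussianPDF 0 1 p.1 * gaussianPDF 0 1 p.2 with hf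
  have hfm : Measurable f := ((measurable_gaussianPDF 0 1).comp measurable_fst).mul
    ((measurable_gaussianPDF 0 1).comp measurable_snd)
  ext u hu
  rw [Measure.map_apply (rot_measurable c s) hu, gauss2_eq,
    withDensity_apply _ ((rot_measurable c s) hu), withDensity_apply _ hu,
    ← lintegral_indicator ((rot_measurable c s) hu) f, ← lintegral_indicator hu f]
  have hind : ∀ p, (R ⁻¹' u).indicator f p = u.indicator f (R p) := by
    intro p
    have hfR : f (R p) = f p := gaussianPDF_rot c s h p
    by_cases hp : R p ∈ u
    · simp [Set.indicator, hp, hfR]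
    · simp [Set.indicator, hp]
  calc ∫⁻ p, (R ⁻¹' u).indicator f p = ∫⁻ p, u.indicator f (R p) := by
        simp_rw [hind]
    _ = ∫⁻ p, u.indicator f p := by
        conv_rhs => rw [← map_rot_volume c s h]
        rw [lintegral_map (hfm.indicator hu) (rot_measurable c s)]

lemma map_lin_gauss2 (u v : ℝ) :
    Measure.map (fun p : ℝ × ℝ => u * p.1 + v * p.2) (gR.prod gR)
      = gaussianReal 0 ⟨u^2 + v^2, by positivity⟩ := by
  by_cases h0 : u = 0 ∧ v = 0
  · obtain ⟨rfl, rfl⟩ := h0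
    have : (fun p : ℝ × ℝ => (0:ℝ) * p.1 + 0 * p.2) = fun _ => (0:ℝ) := by funext p; ring
    rw [this, Measure.map_const]
    have : @Eq NNReal ⟨0^2 + 0^2, by positivity⟩ (0 : NNReal) := by ext; norm_num; rfl
    rw [this, gaussianReal_zero_var]
    simp
  · have hk2 : 0 < u^2 + v^2 := by
      rcases not_and_or.mp h0 with h | h <;> positivity
    set k := Real.sqrt (u^2 + v^2) with hkdef
    have hk : 0 < k := Real.sqrt_pos.mpr hk2
    have hkk : k^2 = u^2 + v^2 := Real.sq_sqrt hk2.le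
    have hcs : (u/k)^2 + (v/k)^2 = 1 := by field_simp; linarith [hkk]
    have hcomp : (fun p : ℝ × ℝ => u * p.1 + v * p.2)
        = (fun x : ℝ => k * x) ∘ Prod.fst ∘ (fun p : ℝ × ℝ => ((u/k) * p.1 + (v/k) * p.2, -(v/k) * p.1 + (u/k) * p.2)) := by
      funext p
      simp only [Function.comp_apply]
      field_simp
    rw [hcomp, ← Function.comp_assoc]
    rw [← Measure.map_map (by fun_prop) (rot_measurable (u/k) (v/k)),
      map_rot_gauss2 _ _ hcs,
      ← Measure.map_map (by fun_prop) measurable_fst, Measure.map_fst_prod]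
    simp only [measure_univ, one_smul]
    rw [gaussianReal_map_const_mul]
    congr 1
    · ring
    · ext
      push_cast
      rw [hkk]
      ring
      rfl

lemma signprod_measurable (α : ℝ) : Measurable (fun θ : ℝ => Real.sign (cos θ) * Real.sign (sin (θ + α))) :=
  (measurable_realSign.comp Real.continuous_cos.measurable).mul
    (measurable_realSign.comp (Real.continuous_sin.measurable.comp (measurable_id.add_const α)))

lemma signprod_intInt (α a b : ℝ) :
    IntervalIntegrable (fun θ : ℝ => Real.sign (cos θ) * Real.sign (sin (θ + α))) volume a b := by
  refine (intervalIntegrable_const (c := (1:ℝ))).mono_fun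
    (signprod_measurable α).aestronglyMeasurable (ae_of_all _ fun θ => ?_)
  simp only [Real.norm_eq_abs, abs_mul, abs_one]
  exact mul_le_one₀ (abs_realSign _) (abs_nonneg _) (abs_realSign _)

lemma piece {f : ℝ → ℝ} {a b C : ℝ} (hab : a ≤ b) (hC : ∀ θ ∈ Ioo a b, f θ = C) :
    ∫ θ in a..b, f θ = (b - a) * C := by
  rw [intervalIntegral.integral_of_le hab, MeasureTheory.integral_Ioc_eq_integral_Ioo,
    setIntegral_congr_fun measurableSet_Ioo hC]
  simp [Real.volume_Ioo, ENNReal.toReal_ofReal (by linarith : (0:ℝ) ≤ b - a), mul_comm, hab]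

lemma cos_neg_of_mem {x : ℝ} (h1 : π/2 < x) (h2 : x < π + π/2) : cos x < 0 :=
  Real.cos_neg_of_pi_div_two_lt_of_lt h1 h2

lemma angular_nonneg {α : ℝ} (h0 : 0 ≤ α) (h1 : α ≤ π/2) :
    (∫ θ in (-π)..π, Real.sign (cos θ) * Real.sign (sin (θ + α))) = 4 * α := by
  have hπ := Real.pi_pos
  set f := fun θ : ℝ => Real.sign (cos θ) * Real.sign (sin (θ + α)) with hf
  have hii := signprod_intInt α
  have split : (∫ θ in (-π)..π, f θ)
      = (((∫ θ in (-π)..(-(π/2)), f θ) + ∫ θ in (-(π/2))..(-α), f θ)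
        + ∫ θ in (-α)..(π/2), f θ) + ((∫ θ in (π/2)..(π-α), f θ) + ∫ θ in (π-α)..π, f θ) := by
    rw [intervalIntegral.integral_add_adjacent_intervals (hii _ _) (hii _ _),
      intervalIntegral.integral_add_adjacent_intervals (hii _ _) (hii _ _),
      intervalIntegral.integral_add_adjacent_intervals (hii _ _) (hii _ _),
      intervalIntegral.integral_add_adjacent_intervals (hii _ _) (hii _ _)]
  have I1 : (∫ θ in (-π)..(-(π/2)), f θ) = (-(π/2) - (-π)) * 1 := by
    refine piece (by linarith) fun θ hθ => ?_
    obtain ⟨hθ1, hθ2⟩ := hθ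
    have hc : cos θ < 0 := by
      have : cos (-θ) < 0 := cos_neg_of_mem (by linarith) (by linarith)
      rwa [Real.cos_neg] at this
    have hs : sin (θ + α) < 0 := Real.sin_neg_of_neg_of_neg_pi_lt (by linarith) (by linarith)
    rw [hf]; simp only; rw [Real.sign_of_neg hc, Real.sign_of_neg hs]; ring
  have I2 : (∫ θ in (-(π/2))..(-α), f θ) = (-α - (-(π/2))) * (-1) := by
    refine piece (by linarith) fun θ hθ => ?_
    obtain ⟨hθ1, hθ2⟩ := hθ
    have hc : 0 < cos θ := Real.cos_pos_of_mem_Ioo ⟨by linarith, by linarith⟩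
    have hs : sin (θ + α) < 0 := Real.sin_neg_of_neg_of_neg_pi_lt (by linarith) (by linarith)
    rw [hf]; simp only; rw [Real.sign_of_pos hc, Real.sign_of_neg hs]; ring
  have I3 : (∫ θ in (-α)..(π/2), f θ) = (π/2 - (-α)) * 1 := by
    refine piece (by linarith) fun θ hθ => ?_
    obtain ⟨hθ1, hθ2⟩ := hθ
    have hc : 0 < cos θ := Real.cos_pos_of_mem_Ioo ⟨by linarith, by linarith⟩
    have hs : 0 < sin (θ + α) := Real.sin_pos_of_pos_of_lt_pi (by linarith) (by linarith)
    rw [hf]; simp only; rw [Real.sign_of_pos hc, Real.sign_of_pos hs]; ring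
  have I4 : (∫ θ in (π/2)..(π-α), f θ) = (π - α - π/2) * (-1) := by
    refine piece (by linarith) fun θ hθ => ?_
    obtain ⟨hθ1, hθ2⟩ := hθ
    have hc : cos θ < 0 := cos_neg_of_mem (by linarith) (by linarith)
    have hs : 0 < sin (θ + α) := Real.sin_pos_of_pos_of_lt_pi (by linarith) (by linarith)
    rw [hf]; simp only; rw [Real.sign_of_neg hc, Real.sign_of_pos hs]; ring
  have I5 : (∫ θ in (π-α)..π, f θ) = (π - (π - α)) * 1 := by
    refine piece (by linarith) fun θ hθ => ?_
    obtain ⟨hθ1, hθ2⟩ := hθ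
    have hc : cos θ < 0 := cos_neg_of_mem (by linarith) (by linarith)
    have hs : sin (θ + α) < 0 := by
      have h' : 0 < sin (θ + α - π) := Real.sin_pos_of_pos_of_lt_pi (by linarith) (by linarith)
      rw [Real.sin_sub_pi] at h'; linarith
    rw [hf]; simp only; rw [Real.sign_of_neg hc, Real.sign_of_neg hs]; ring
  rw [split, I1, I2, I3, I4, I5]; ring

lemma angular (α : ℝ) (h0 : -(π/2) ≤ α) (h1 : α ≤ π/2) :
    (∫ θ in (-π)..π, Real.sign (cos θ) * Real.sign (sin (θ + α))) = 4 * α := by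
  rcases le_or_gt 0 α with h | h
  · exact angular_nonneg h h1
  · have key : ∀ θ : ℝ, Real.sign (cos θ) * Real.sign (sin (θ + α))
        = -((fun t => Real.sign (cos t) * Real.sign (sin (t + (-α)))) (-θ)) := by
      intro θ
      simp only
      rw [Real.cos_neg, show -θ + -α = -(θ + α) by ring, Real.sin_neg, Real.sign_neg]
      ring
    calc (∫ θ in (-π)..π, Real.sign (cos θ) * Real.sign (sin (θ + α)))
        = ∫ θ in (-π)..π, -((fun t => Real.sign (cos t) * Real.sign (sin (t + (-α)))) (-θ)) := by
          simp_rw [key]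
      _ = -∫ θ in (-π)..π, (fun t => Real.sign (cos t) * Real.sign (sin (t + (-α)))) (-θ) := by
          rw [intervalIntegral.integral_neg]
      _ = -∫ θ in (-π)..π, Real.sign (cos θ) * Real.sign (sin (θ + (-α))) := by
          rw [intervalIntegral.integral_comp_neg fun t => Real.sign (cos t) * Real.sign (sin (t + (-α)))]
          norm_num
      _ = 4 * α := by rw [angular_nonneg (by linarith) (by linarith)]; ring

lemma radial : (∫ r in Ioi (0:ℝ), r * rexp (-r^2/2)) = 1 := by
  have hderiv : ∀ x ∈ Ioi (0:ℝ), HasDerivAt (fun r : ℝ => -rexp (-r^2/2)) (x * rexp (-x^2/2)) x := by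
    intro x _
    have h0 : HasDerivAt (fun r : ℝ => -r^2/2) (-(2*x^1)/2) x := (hasDerivAt_pow 2 x).neg.div_const 2
    have : HasDerivAt (fun r : ℝ => -rexp (-r^2/2)) (-(rexp (-x^2/2) * (-(2*x^1)/2))) x := (h0.exp).neg
    convert this using 1
    ring
  have hpos : ∀ x ∈ Ioi (0:ℝ), 0 ≤ x * rexp (-x^2/2) := fun x hx =>
    mul_nonneg (le_of_lt hx) (Real.exp_nonneg _)
  have htendsto : Filter.Tendsto (fun r : ℝ => -rexp (-r^2/2)) Filter.atTop (nhds 0) := by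
    rw [show (0:ℝ) = -0 by ring]
    apply Filter.Tendsto.neg
    apply Real.tendsto_exp_atBot.comp
    have he : (fun x : ℝ => -x^2/2) = fun x => -(x^2/2) := by funext x; ring
    rw [he]
    exact Filter.tendsto_neg_atBot_iff.mpr ((Filter.tendsto_pow_atTop two_ne_zero).atTop_div_const (by norm_num))
  have hcont : ContinuousWithinAt (fun r : ℝ => -rexp (-r^2/2)) (Ici 0) 0 := by
    apply Continuous.continuousWithinAt; fun_prop
  have := integral_Ioi_of_hasDerivAt_of_nonneg hcont hderiv hpos htendsto
  rw [this]
  norm_num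

lemma core (ρ : ℝ) (hρ : ρ^2 ≤ 1) :
    (∫ p : ℝ × ℝ, Real.sign p.1 * Real.sign (ρ * p.1 + Real.sqrt (1 - ρ^2) * p.2)
      ∂(gR.prod gR)) = 2/π * Real.arcsin ρ := by
  have hπ := Real.pi_pos
  have hρ1 : -1 ≤ ρ := by nlinarith
  have hρ2 : ρ ≤ 1 := by nlinarith
  set c := Real.sqrt (1 - ρ^2) with hc
  set F := fun p : ℝ × ℝ => Real.sign p.1 * Real.sign (ρ * p.1 + c * p.2) with hF
  -- Step 1: convert to Lebesgue integral with density
  set nn : ℝ → NNReal := fun x => (gaussianPDFReal 0 1 x).toNNReal with hnn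
  have hnnm : Measurable fun p : ℝ × ℝ => nn p.1 * nn p.2 := by
    apply Measurable.mul <;>
      exact (measurable_gaussianPDFReal 0 1).real_toNNReal.comp (by fun_prop)
  have hdens : (fun p : ℝ × ℝ => gaussianPDF 0 1 p.1 * gaussianPDF 0 1 p.2)
      = fun p : ℝ × ℝ => ((nn p.1 * nn p.2 : NNReal) : ENNReal) := by
    funext p
    rw [ENNReal.coe_mul, gaussianPDF, gaussianPDF, ENNReal.ofReal, ENNReal.ofReal]
  have step1 : (∫ p, F p ∂(gR.prod gR))
      = ∫ p : ℝ × ℝ, F p * (gaussianPDFReal 0 1 p.1 * gaussianPDFReal 0 1 p.2) := by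
    rw [gauss2_eq, hdens, integral_withDensity_eq_integral_smul hnnm]
    congr 1
    funext p
    rw [NNReal.smul_def, smul_eq_mul, NNReal.coe_mul, hnn]
    simp only
    rw [Real.coe_toNNReal _ (gaussianPDFReal_nonneg 0 1 p.1),
      Real.coe_toNNReal _ (gaussianPDFReal_nonneg 0 1 p.2)]
    ring
  -- Step 2: polar coordinates
  rw [step1, ← integral_comp_polarCoord_symm]
  have htgt : polarCoord.target = Set.Ioi (0:ℝ) ×ˢ Set.Ioo (-π) π := rfl
  -- Step 3: rewrite integrand on target
  have step3 : ∫ p in polarCoord.target,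
        p.1 • ((fun q : ℝ × ℝ => F q * (gaussianPDFReal 0 1 q.1 * gaussianPDFReal 0 1 q.2)) (polarCoord.symm p))
      = ∫ p in Set.Ioi (0:ℝ) ×ˢ Set.Ioo (-π) π,
          (p.1 * ((2*π)⁻¹ * rexp (-p.1^2/2))) * (Real.sign (cos p.2) * Real.sign (ρ * cos p.2 + c * sin p.2)) := by
    rw [htgt]
    apply setIntegral_congr_fun (measurableSet_Ioi.prod measurableSet_Ioo)
    rintro ⟨r, θ⟩ ⟨hr, hθ⟩
    simp only [F]
    have hsymm : polarCoord.symm (r, θ) = (r * cos θ, r * sin θ) := rfl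
    rw [hsymm]
    simp only
    have hr' : (0:ℝ) < r := hr
    rw [realSign_pos_mul hr', show ρ * (r * cos θ) + c * (r * sin θ) = r * (ρ * cos θ + c * sin θ) by ring,
      realSign_pos_mul hr', pdf_eq, pdf_eq]
    have hsq : (Real.sqrt (2*π))⁻¹ * ((Real.sqrt (2*π))⁻¹) = (2*π)⁻¹ := by
      rw [← mul_inv, Real.mul_self_sqrt (by positivity)]
    have hexp : rexp (-(r * cos θ)^2/2) * rexp (-(r * sin θ)^2/2) = rexp (-r^2/2) := by
      rw [← Real.exp_add]
      congr 1
      nlinarith [Real.sin_sq_add_cos_sq θ]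
    rw [smul_eq_mul]
    calc r * (Real.sign (cos θ) * Real.sign (ρ * cos θ + c * sin θ) *
          ((Real.sqrt (2*π))⁻¹ * rexp (-(r * cos θ)^2/2) * ((Real.sqrt (2*π))⁻¹ * rexp (-(r * sin θ)^2/2))))
        = r * (((Real.sqrt (2*π))⁻¹ * ((Real.sqrt (2*π))⁻¹)) * (rexp (-(r * cos θ)^2/2) * rexp (-(r * sin θ)^2/2)))
            * (Real.sign (cos θ) * Real.sign (ρ * cos θ + c * sin θ)) := by ring
      _ = _ := by rw [hsq, hexp]
  rw [step3]
  -- Step 4: Fubini factorization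
  have step4 : ∫ p in Set.Ioi (0:ℝ) ×ˢ Set.Ioo (-π) π,
        (p.1 * ((2*π)⁻¹ * rexp (-p.1^2/2))) * (Real.sign (cos p.2) * Real.sign (ρ * cos p.2 + c * sin p.2))
      = (∫ r in Set.Ioi (0:ℝ), r * ((2*π)⁻¹ * rexp (-r^2/2)))
        * ∫ θ in Set.Ioo (-π) π, Real.sign (cos θ) * Real.sign (ρ * cos θ + c * sin θ) := by
    rw [Measure.volume_eq_prod, ← Measure.prod_restrict]
    exact integral_prod_mul (fun r => r * ((2*π)⁻¹ * rexp (-r^2/2)))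
      (fun θ => Real.sign (cos θ) * Real.sign (ρ * cos θ + c * sin θ))
  rw [step4]
  -- Step 5: radial value
  have hrad : (∫ r in Set.Ioi (0:ℝ), r * ((2*π)⁻¹ * rexp (-r^2/2))) = (2*π)⁻¹ := by
    have : (fun r : ℝ => r * ((2*π)⁻¹ * rexp (-r^2/2))) = fun r => (2*π)⁻¹ * (r * rexp (-r^2/2)) := by
      funext r; ring
    rw [this, MeasureTheory.integral_const_mul, radial, mul_one]
  rw [hrad]
  -- Step 6: angular value
  set α := Real.arcsin ρ with hα
  have hpt : ∀ θ : ℝ, ρ * cos θ + c * sin θ = sin (θ + α) := by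
    intro θ
    rw [Real.sin_add, hα, Real.cos_arcsin, Real.sin_arcsin hρ1 hρ2, hc]
    ring
  have hang : (∫ θ in Set.Ioo (-π) π, Real.sign (cos θ) * Real.sign (ρ * cos θ + c * sin θ)) = 4 * α := by
    simp_rw [hpt]
    rw [← MeasureTheory.integral_Ioc_eq_integral_Ioo, ← intervalIntegral.integral_of_le (by linarith)]
    exact angular α (Real.neg_pi_div_two_le_arcsin ρ) (Real.arcsin_le_pi_div_two ρ)
  rw [hang]
  field_simp
  ring

lemma term {Ω : Type*} [MeasurableSpace Ω] (μ : Measure Ω) [IsProbabilityMeasure μ]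
    (X Y Z : Ω → ℝ) (hX : Measurable X) (hY : Measurable Y) (hZ : Measurable Z)
    (hXYZ : IndepFun X (fun ω => (Y ω, Z ω)) μ)
    (hYZ : IndepFun Y Z μ)
    (hgX : μ.map X = gR) (hgY : μ.map Y = gR) (hgZ : μ.map Z = gR)
    (ρ u v : ℝ) (h1 : ρ^2 + u^2 + v^2 = 1) :
    ∫ ω, Real.sign (X ω) * Real.sign (ρ * X ω + u * Y ω + v * Z ω) ∂μ
      = 2/π * Real.arcsin ρ := by
  have hρ : ρ^2 ≤ 1 := by nlinarith [sq_nonneg u, sq_nonneg v]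
  have h1ρ : (0:ℝ) ≤ 1 - ρ^2 := by linarith
  set σ' := Real.sqrt (1 - ρ^2) with hσ'
  set N := fun ω => u * Y ω + v * Z ω with hN
  have hNm : Measurable N := by fun_prop
  have hpairYZ : μ.map (fun ω => (Y ω, Z ω)) = gR.prod gR := by
    rw [(indepFun_iff_map_prod_eq_prod_map_map hY.aemeasurable hZ.aemeasurable).mp hYZ, hgY, hgZ]
  have hmapN : μ.map N = gaussianReal 0 ⟨u^2 + v^2, by positivity⟩ := by
    have : N = (fun p : ℝ × ℝ => u * p.1 + v * p.2) ∘ (fun ω => (Y ω, Z ω)) := rfl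
    rw [this, ← Measure.map_map (by fun_prop) (hY.prodMk hZ), hpairYZ, map_lin_gauss2]
  have hXN : IndepFun X N μ := by
    have := hXYZ.comp measurable_id (show Measurable fun p : ℝ × ℝ => u * p.1 + v * p.2 by fun_prop)
    exact this
  have hvar : (⟨u^2 + v^2, by positivity⟩ : NNReal) = (show NNReal from ⟨σ'^2, sq_nonneg σ'⟩) * (1 : NNReal) := by
    ext
    push_cast
    show u^2 + v^2 = σ'^2 * 1
    rw [hσ', Real.sq_sqrt h1ρ]
    linarith
  have hjoint : μ.map (fun ω => (X ω, N ω))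
      = (gR.prod gR).map (Prod.map id (fun x : ℝ => σ' * x)) := by
    have hmapσ : Measure.map (fun x : ℝ => σ' * x) gR = gaussianReal 0 ((show NNReal from ⟨σ'^2, sq_nonneg σ'⟩) * (1 : NNReal)) := by
      rw [show (fun x : ℝ => σ' * x) = fun x : ℝ => σ' * x from rfl, gaussianReal_map_const_mul σ']
      norm_num
      congr 1
      exact (mul_one (_ : NNReal)).symm
    rw [(indepFun_iff_map_prod_eq_prod_map_map hX.aemeasurable hNm.aemeasurable).mp hXN, hgX,
      hmapN, hvar, ← hmapσ]
    rw [← Measure.map_prod_map _ _ measurable_id (by fun_prop), Measure.map_id]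
  set F := fun p : ℝ × ℝ => Real.sign p.1 * Real.sign (ρ * p.1 + σ' * p.2) with hF
  have hFm : Measurable F := by
    apply Measurable.mul <;> exact measurable_realSign.comp (by fun_prop)
  have harg : (fun ω => Real.sign (X ω) * Real.sign (ρ * X ω + u * Y ω + v * Z ω))
      = fun ω => (fun p : ℝ × ℝ => Real.sign p.1 * Real.sign (ρ * p.1 + p.2)) (X ω, N ω) := by
    funext ω
    simp only [hN]
    ring_nf
  calc ∫ ω, Real.sign (X ω) * Real.sign (ρ * X ω + u * Y ω + v * Z ω) ∂μ
      = ∫ ω, (fun p : ℝ × ℝ => Real.sign p.1 * Real.sign (ρ * p.1 + p.2)) (X ω, N ω) ∂μ := by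
        rw [harg]
    _ = ∫ p : ℝ × ℝ, Real.sign p.1 * Real.sign (ρ * p.1 + p.2) ∂(μ.map (fun ω => (X ω, N ω))) := by
        rw [integral_map (hX.prodMk hNm).aemeasurable]
        exact (Measurable.mul (measurable_realSign.comp (by fun_prop))
          (measurable_realSign.comp (by fun_prop))).aestronglyMeasurable
    _ = ∫ p : ℝ × ℝ, Real.sign p.1 * Real.sign (ρ * p.1 + p.2)
          ∂((gR.prod gR).map (Prod.map id (fun x : ℝ => σ' * x))) := by rw [hjoint]
    _ = ∫ p : ℝ × ℝ, F p ∂(gR.prod gR) := by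
        rw [integral_map (by fun_prop : Measurable (Prod.map (id : ℝ → ℝ) fun x : ℝ => σ' * x)).aemeasurable]
        · rfl
        · exact (Measurable.mul (measurable_realSign.comp (by fun_prop))
            (measurable_realSign.comp (by fun_prop))).aestronglyMeasurable
    _ = 2/π * Real.arcsin ρ := core ρ hρ

lemma integral_complex_ofReal' {Ω : Type*} [MeasurableSpace Ω] (μ : Measure Ω) (g : Ω → ℝ) :
    ∫ ω, ((g ω : ℝ) : ℂ) ∂μ = ((∫ ω, g ω ∂μ : ℝ) : ℂ) := integral_ofReal

end AuxArcsineLaw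

open MeasureTheory ProbabilityTheory Complex

/-- **Complex arcsine law.**
Let `G1, G2, G3, G4` be i.i.d. real standard normal random variables, let `r s : ℝ` with
`r² + s² ≤ 1`, and set `U1 = G1`, `U2 = G2`,
`V1 = r G1 + s G2 + √(1 − r² − s²) G3`, `V2 = −s G1 + r G2 + √(1 − r² − s²) G4`.  Then
`E[(sgn U1 + j sgn U2)(sgn V1 − j sgn V2)] = (4/π)(arcsin r + j arcsin s)`. -/
theorem complex_arcsine_law
    {Ω : Type*} [MeasurableSpace Ω] (μ : Measure Ω) [IsProbabilityMeasure μ]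
    (G : Fin 4 → Ω → ℝ) (hmeas : ∀ i, Measurable (G i))
    (hindep : iIndepFun G μ)
    (hgauss : ∀ i, Measure.map (G i) μ = gaussianReal 0 1)
    (r s : ℝ) (hrs : r ^ 2 + s ^ 2 ≤ 1) :
    ∫ ω,
        (((Real.sign (G 0 ω) : ℝ) : ℂ) + Complex.I * ((Real.sign (G 1 ω) : ℝ) : ℂ)) *
          (((Real.sign (r * G 0 ω + s * G 1 ω +
                Real.sqrt (1 - r ^ 2 - s ^ 2) * G 2 ω) : ℝ) : ℂ) -
            Complex.I * ((Real.sign (-s * G 0 ω + r * G 1 ω +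
                Real.sqrt (1 - r ^ 2 - s ^ 2) * G 3 ω) : ℝ) : ℂ)) ∂μ =
      ((4 / Real.pi : ℝ) : ℂ) *
        (((Real.arcsin r : ℝ) : ℂ) + Complex.I * ((Real.arcsin s : ℝ) : ℂ)) := by
  have hπ := Real.pi_pos
  set c := Real.sqrt (1 - r ^ 2 - s ^ 2) with hc
  have hc2 : c^2 = 1 - r^2 - s^2 := Real.sq_sqrt (by linarith)
  -- the four real-valued product functions
  set V1 := fun ω => r * G 0 ω + s * G 1 ω + c * G 2 ω with hV1
  set V2 := fun ω => -s * G 0 ω + r * G 1 ω + c * G 3 ω with hV2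
  set f1 := fun ω => Real.sign (G 0 ω) * Real.sign (V1 ω) with hf1
  set f2 := fun ω => Real.sign (G 1 ω) * Real.sign (V2 ω) with hf2
  set f3 := fun ω => Real.sign (G 1 ω) * Real.sign (V1 ω) with hf3
  set f4 := fun ω => Real.sign (G 0 ω) * Real.sign (V2 ω) with hf4
  have hVm1 : Measurable V1 := by fun_prop (disch := exact fun _ => hmeas _)
  have hVm2 : Measurable V2 := by fun_prop (disch := exact fun _ => hmeas _)
  have hfm : ∀ i j, Measurable fun ω => Real.sign (G i ω) * Real.sign (G j ω) := fun i j =>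
    (measurable_realSign.comp (hmeas i)).mul (measurable_realSign.comp (hmeas j))
  have hintf : ∀ (g : Ω → ℝ), Measurable g → (∀ ω, |g ω| ≤ 1) → Integrable g μ := by
    intro g hg hb
    exact (integrable_const (1:ℝ)).mono' hg.aestronglyMeasurable (ae_of_all _ fun ω => by
      rw [Real.norm_eq_abs]; exact hb ω)
  have habs : ∀ (a b : ℝ), |Real.sign a * Real.sign b| ≤ 1 := fun a b => by
    rw [abs_mul]
    exact mul_le_one₀ (abs_realSign _) (abs_nonneg _) (abs_realSign _)
  have hint1 : Integrable f1 μ := hintf _ ((measurable_realSign.comp (hmeas 0)).mul (measurable_realSign.comp hVm1)) (fun ω => habs _ _)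
  have hint2 : Integrable f2 μ := hintf _ ((measurable_realSign.comp (hmeas 1)).mul (measurable_realSign.comp hVm2)) (fun ω => habs _ _)
  have hint3 : Integrable f3 μ := hintf _ ((measurable_realSign.comp (hmeas 1)).mul (measurable_realSign.comp hVm1)) (fun ω => habs _ _)
  have hint4 : Integrable f4 μ := hintf _ ((measurable_realSign.comp (hmeas 0)).mul (measurable_realSign.comp hVm2)) (fun ω => habs _ _)
  -- values of the four integrals
  have hpair : ∀ i j k : Fin 4, j ≠ i → k ≠ i → j ≠ k →
      ProbabilityTheory.IndepFun (G i) (fun ω => (G j ω, G k ω)) μ := fun i j k hji hki hjk =>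
    (hindep.indepFun_prodMk hmeas j k i hji hki).symm
  have hT1 : ∫ ω, f1 ω ∂μ = 2/Real.pi * Real.arcsin r := by
    have := term μ (G 0) (G 1) (G 2) (hmeas 0) (hmeas 1) (hmeas 2)
      (hpair 0 1 2 (by decide) (by decide) (by decide)) (hindep.indepFun (by decide))
      (hgauss 0) (hgauss 1) (hgauss 2) r s c (by rw [hc2]; ring)
    rw [← this]
  have hT2 : ∫ ω, f2 ω ∂μ = 2/Real.pi * Real.arcsin r := by
    have := term μ (G 1) (G 0) (G 3) (hmeas 1) (hmeas 0) (hmeas 3)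
      (hpair 1 0 3 (by decide) (by decide) (by decide)) (hindep.indepFun (by decide))
      (hgauss 1) (hgauss 0) (hgauss 3) r (-s) c (by rw [hc2]; ring)
    rw [← this]
    congr 1
    funext ω
    simp only [hf2, hV2]
    congr 2
    ring
  have hT3 : ∫ ω, f3 ω ∂μ = 2/Real.pi * Real.arcsin s := by
    have := term μ (G 1) (G 0) (G 2) (hmeas 1) (hmeas 0) (hmeas 2)
      (hpair 1 0 2 (by decide) (by decide) (by decide)) (hindep.indepFun (by decide))
      (hgauss 1) (hgauss 0) (hgauss 2) s r c (by rw [hc2]; ring)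
    rw [← this]
    congr 1
    funext ω
    simp only [hf3, hV1]
    congr 2
    ring
  have hT4 : ∫ ω, f4 ω ∂μ = -(2/Real.pi * Real.arcsin s) := by
    have := term μ (G 0) (G 1) (G 3) (hmeas 0) (hmeas 1) (hmeas 3)
      (hpair 0 1 3 (by decide) (by decide) (by decide)) (hindep.indepFun (by decide))
      (hgauss 0) (hgauss 1) (hgauss 3) (-s) r c (by rw [hc2]; ring)
    rw [Real.arcsin_neg] at this
    rw [show -(2/Real.pi*Real.arcsin s) = 2/Real.pi * -Real.arcsin s by ring, ← this]
  -- expand the complex integrand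
  have hexp : ∀ ω : Ω,
      (((Real.sign (G 0 ω) : ℝ) : ℂ) + Complex.I * ((Real.sign (G 1 ω) : ℝ) : ℂ)) *
        (((Real.sign (r * G 0 ω + s * G 1 ω + c * G 2 ω) : ℝ) : ℂ) -
          Complex.I * ((Real.sign (-s * G 0 ω + r * G 1 ω + c * G 3 ω) : ℝ) : ℂ))
      = ((f1 ω + f2 ω : ℝ) : ℂ) + Complex.I * ((f3 ω - f4 ω : ℝ) : ℂ) := by
    intro ω
    simp only [hf1, hf2, hf3, hf4, hV1, hV2]
    push_cast
    have hI2 : (Complex.I : ℂ) * Complex.I = -1 := Complex.I_mul_I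
    ring_nf
    rw [Complex.I_sq]
    ring
  calc ∫ ω,
        (((Real.sign (G 0 ω) : ℝ) : ℂ) + Complex.I * ((Real.sign (G 1 ω) : ℝ) : ℂ)) *
          (((Real.sign (r * G 0 ω + s * G 1 ω + c * G 2 ω) : ℝ) : ℂ) -
            Complex.I * ((Real.sign (-s * G 0 ω + r * G 1 ω + c * G 3 ω) : ℝ) : ℂ)) ∂μ
      = ∫ ω, (((f1 ω + f2 ω : ℝ) : ℂ) + Complex.I * ((f3 ω - f4 ω : ℝ) : ℂ)) ∂μ := by
        congr 1
        funext ω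
        exact hexp ω
    _ = (∫ ω, ((f1 ω + f2 ω : ℝ) : ℂ) ∂μ) + ∫ ω, Complex.I * ((f3 ω - f4 ω : ℝ) : ℂ) ∂μ := by
        apply integral_add
        · exact ((hint1.add hint2).ofReal (𝕜 := ℂ))
        · exact (((hint3.sub hint4).ofReal (𝕜 := ℂ)).const_mul Complex.I)
    _ = (((∫ ω, (f1 ω + f2 ω) ∂μ : ℝ)) : ℂ) + Complex.I * ((∫ ω, (f3 ω - f4 ω) ∂μ : ℝ) : ℂ) := by
        rw [integral_const_mul, integral_complex_ofReal', integral_complex_ofReal']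
    _ = ((4/Real.pi * Real.arcsin r : ℝ) : ℂ) + Complex.I * ((4/Real.pi * Real.arcsin s : ℝ) : ℂ) := by
        rw [integral_add hint1 hint2, integral_sub hint3 hint4, hT1, hT2, hT3, hT4]
        push_cast
        ring
    _ = ((4 / Real.pi : ℝ) : ℂ) *
        (((Real.arcsin r : ℝ) : ℂ) + Complex.I * ((Real.arcsin s : ℝ) : ℂ)) := by
        push_cast
        ring
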